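/- With notation as in the transport-of-equations setup: let Z be a subspace of codimension f of A ⊗ S²V, H a hyperplane of V such that Z is transverse to A ⊗ H·V, Z′ = Z ∩ (A ⊗ H·V), and T a subspace of A ⊗ H·V contained in Z′. Set F′ = (A ⊗ H·V)/T and F = (A ⊗ S²V)/Z, and let f*_{Z,T} : A ⊗ V → (V^∨ ⊗ F) ⊕ (H^∨ ⊗ F′) be the direct sum of the two associated maps. Then for a linear map m : B → A ⊗ V, the image of m(1) is contained in Z and the image of m_H(1) is contained in T if and only if f*_{Z,T} ∘ m = 0. -/

import Mathlib

/-!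
STATEMENT 13 (Proposition 2.3).  Polynomial model: V = linear forms in
`MvPolynomial (Fin (n+1)) k`, S²V = quadratic forms, H the hyperplane spanned
by X_0, …, X_{n-1} (indexed via `Fin.castSucc`), H·V ⊆ S²V the span of the
products X_i·X_q (i < n).  The subspace Z of codimension f in A ⊗ S²V is cut
out by the F-form gL (Z = (A ⊗ S²V) ∩ ker gL), it is transverse to A ⊗ H·V,
and T ⊆ Z' = Z ∩ (A ⊗ H·V) is cut out inside A ⊗ H·V by the F'-form fL.  The
map f*_{Z,T} : A ⊗ V → (V^∨ ⊗ F) ⊕ (H^∨ ⊗ F') is the direct sum of the two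
associated maps gs, fs (gs t s q = gL(t·X_q), fs t s p = fL(t·X_p), p ∈ H).
Claim: Im(m(1)) ⊆ Z and Im(m_H(1)) ⊆ T  ↔  f*_{Z,T} ∘ m = 0.
-/

open MvPolynomial

lemma finsupp_degree_one {σ : Type*} {d : σ →₀ ℕ} (hd : Finsupp.degree d = 1) :
    ∃ i, d = Finsupp.single i 1 := by
  have hne : d ≠ 0 := by
    intro h; rw [h] at hd; simp at hd
  obtain ⟨i, hi⟩ := Finsupp.support_nonempty_iff.mpr hne
  have hcard : d.support.card ≤ 1 := by
    have h2 := Finset.card_nsmul_le_sum d.support d 1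
      (fun i hi => Nat.one_le_iff_ne_zero.mpr (Finsupp.mem_support_iff.mp hi))
    have h3 : d.support.sum d = 1 := hd
    simp only [smul_eq_mul, mul_one] at h2
    omega
  have hsupp : d.support = {i} :=
    Finset.eq_singleton_iff_unique_mem.mpr ⟨hi, fun j hj =>
      Finset.card_le_one.mp hcard j hj i hi⟩
  have := Finsupp.support_eq_singleton.mp hsupp
  refine ⟨i, ?_⟩
  have hdi : d i = 1 := by
    have : Finsupp.degree d = d i := by rw [show Finsupp.degree d = d.support.sum d from rfl, hsupp, Finset.sum_singleton]
    omega
  rw [this.2, hdi]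

lemma homog_one_mem {k : Type*} [Field k] {n : ℕ} {p : MvPolynomial (Fin (n+1)) k}
    (hp : p.IsHomogeneous 1) (r : Fin (n+1)) (S : Set (MvPolynomial (Fin (n+1)) k))
    (hS : ∀ q, X q * X r ∈ S) :
    p * X r ∈ Submodule.span k S := by
  rw [p.as_sum, Finset.sum_mul]
  apply Submodule.sum_mem
  intro d hd
  have hdeg : Finsupp.degree d = 1 := by
    rw [Finsupp.degree_eq_weight_one]
    exact hp (mem_support_iff.mp hd)
  obtain ⟨q, rfl⟩ := finsupp_degree_one hdeg
  have : (monomial (Finsupp.single q 1)) (coeff (Finsupp.single q 1) p) * X r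
      = coeff (Finsupp.single q 1) p • (X q * X r) := by
    rw [smul_eq_C_mul, ← mul_assoc]
    congr 1
    rw [X, C_mul_monomial, mul_one]
  rw [this]
  exact Submodule.smul_mem _ _ (Submodule.subset_span (hS q))

section Main
variable {k : Type*} [Field k] {n a b : ℕ}

lemma sum_decomp {m : ℕ} (t : Fin a → MvPolynomial (Fin (n + 1)) k) (v : Fin m → k)
    (e : Fin m → Fin (n + 1)) :
    (fun j => t j * ∑ q, C (v q) * X (e q)) =
      ∑ q, v q • ((fun j => t j * X (e q)) : Fin a → MvPolynomial (Fin (n + 1)) k) := by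
  funext j
  rw [Finset.mul_sum, Finset.sum_apply]
  apply Finset.sum_congr rfl
  intro q _
  rw [Pi.smul_apply, smul_eq_C_mul]
  ring

lemma sum_decomp_id (t : Fin a → MvPolynomial (Fin (n + 1)) k) (v : Fin (n + 1) → k) :
    (fun j => t j * ∑ q, (C (v q) : MvPolynomial (Fin (n + 1)) k) * (X q : MvPolynomial (Fin (n + 1)) k)) =
      ∑ q, v q • ((fun j => t j * X q) : Fin a → MvPolynomial (Fin (n + 1)) k) :=
  sum_decomp t v id

lemma single_decomp {m : ℕ} (t : Fin a → MvPolynomial (Fin (n + 1)) k) (q : Fin m)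
    (e : Fin m → Fin (n + 1)) :
    (fun j => t j * ∑ q', (C ((Pi.single q (1:k) : Fin m → k) q') : MvPolynomial (Fin (n + 1)) k) * (X (e q') : MvPolynomial (Fin (n + 1)) k)) =
      fun j => t j * X (e q) := by
  funext j
  congr 1
  simp [Pi.single_apply, apply_ite C, ite_mul]

lemma single_decomp_id (t : Fin a → MvPolynomial (Fin (n + 1)) k) (q : Fin (n + 1)) :
    (fun j => t j * ∑ q', (C ((Pi.single q (1:k) : Fin (n + 1) → k) q') : MvPolynomial (Fin (n + 1)) k) * (X q' : MvPolynomial (Fin (n + 1)) k)) =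
      fun j => t j * X q :=
  single_decomp t q id

end Main

theorem transport_of_equations_combined
    (k : Type*) [Field k] (n a b f f' : ℕ)
    (mL : (Fin b → k) →ₗ[k] (Fin a → MvPolynomial (Fin (n + 1)) k))
    (hm : ∀ w j, (mL w j).IsHomogeneous 1)
    (gL : (Fin a → MvPolynomial (Fin (n + 1)) k) →ₗ[k] (Fin f → k))
    (fL : (Fin a → MvPolynomial (Fin (n + 1)) k) →ₗ[k] (Fin f' → k))
    -- Z = (A ⊗ S²V) ∩ ker gL has codimension f in A ⊗ S²V :
    (hZcodim :
      Module.finrank k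
        ↥((Submodule.pi Set.univ fun _ : Fin a =>
            homogeneousSubmodule (Fin (n + 1)) k 2) ⊓ LinearMap.ker gL) + f =
      Module.finrank k
        ↥(Submodule.pi Set.univ fun _ : Fin a =>
            homogeneousSubmodule (Fin (n + 1)) k 2))
    -- Z is transverse to A ⊗ H·V :
    (htrans :
      ((Submodule.pi Set.univ fun _ : Fin a =>
          homogeneousSubmodule (Fin (n + 1)) k 2) ⊓ LinearMap.ker gL) ⊔
        (Submodule.pi Set.univ fun _ : Fin a =>
          Submodule.span k {p : MvPolynomial (Fin (n + 1)) k |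
            ∃ (i : Fin n) (q : Fin (n + 1)), p = X (Fin.castSucc i) * X q}) =
      (Submodule.pi Set.univ fun _ : Fin a =>
        homogeneousSubmodule (Fin (n + 1)) k 2))
    -- T = (A ⊗ H·V) ∩ ker fL is contained in Z' = Z ∩ (A ⊗ H·V) :
    (hTZ :
      ((Submodule.pi Set.univ fun _ : Fin a =>
          Submodule.span k {p : MvPolynomial (Fin (n + 1)) k |
            ∃ (i : Fin n) (q : Fin (n + 1)), p = X (Fin.castSucc i) * X q}) ⊓
        LinearMap.ker fL) ≤
      ((Submodule.pi Set.univ fun _ : Fin a =>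
          homogeneousSubmodule (Fin (n + 1)) k 2) ⊓ LinearMap.ker gL))
    (gs : (Fin a → MvPolynomial (Fin (n + 1)) k) → Matrix (Fin f) (Fin (n + 1)) k)
    (hgs : ∀ t s q, gs t s q = gL (fun j => t j * X q) s)
    (fs : (Fin a → MvPolynomial (Fin (n + 1)) k) → Matrix (Fin f') (Fin n) k)
    (hfs : ∀ t s p, fs t s p = fL (fun j => t j * X (Fin.castSucc p)) s) :
    ((∀ (w : Fin b → k) (v : Fin (n + 1) → k),
        (fun j => mL w j * ∑ q, C (v q) * X q) ∈
          (Submodule.pi Set.univ fun _ : Fin a =>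
            homogeneousSubmodule (Fin (n + 1)) k 2) ⊓ LinearMap.ker gL) ∧
     (∀ (w : Fin b → k) (h : Fin n → k),
        (fun j => mL w j * ∑ p, C (h p) * X (Fin.castSucc p)) ∈
          (Submodule.pi Set.univ fun _ : Fin a =>
            Submodule.span k {p : MvPolynomial (Fin (n + 1)) k |
              ∃ (i : Fin n) (q : Fin (n + 1)), p = X (Fin.castSucc i) * X q}) ⊓
          LinearMap.ker fL))
    ↔ (∀ w, gs (mL w) = 0 ∧ fs (mL w) = 0) := by
  constructor
  · rintro ⟨h1, h2⟩ w
    constructor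
    · ext s q
      have hmem := LinearMap.mem_ker.mp (Submodule.mem_inf.mp (h1 w (Pi.single q 1))).2
      rw [single_decomp_id (mL w) q] at hmem
      rw [hgs, hmem]
      rfl
    · ext s p
      have hmem := LinearMap.mem_ker.mp (Submodule.mem_inf.mp (h2 w (Pi.single p 1))).2
      rw [single_decomp (mL w) p Fin.castSucc] at hmem
      rw [hfs, hmem]
      rfl
  · intro h
    constructor
    · intro w v
      rw [Submodule.mem_inf]
      refine ⟨?_, ?_⟩
      · rw [Submodule.mem_pi]
        intro j _
        rw [mem_homogeneousSubmodule]
        exact (hm w j).mul (IsHomogeneous.sum _ _ _ fun q _ =>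
          (isHomogeneous_X k q).C_mul (v q))
      · rw [LinearMap.mem_ker, sum_decomp_id (mL w) v, map_sum]
        apply Finset.sum_eq_zero
        intro q _
        rw [map_smul]
        have : gL (fun j => mL w j * X q) = 0 := by
          funext s
          have := congrFun (congrFun (h w).1 s) q
          rw [hgs] at this
          simpa using this
        rw [this, smul_zero]
    · intro w hv
      rw [Submodule.mem_inf]
      refine ⟨?_, ?_⟩
      · rw [Submodule.mem_pi]
        intro j _
        show mL w j * ∑ p, C (hv p) * X (Fin.castSucc p) ∈ _
        rw [Finset.mul_sum]
        apply Submodule.sum_mem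
        intro p _
        have he : mL w j * (C (hv p) * X (Fin.castSucc p))
            = hv p • (mL w j * X (Fin.castSucc p)) := by
          rw [smul_eq_C_mul]; ring
        rw [he]
        exact Submodule.smul_mem _ _
          (homog_one_mem (hm w j) (Fin.castSucc p) _ (fun q => ⟨p, q, mul_comm _ _⟩))
      · rw [LinearMap.mem_ker, sum_decomp (mL w) hv Fin.castSucc, map_sum]
        apply Finset.sum_eq_zero
        intro p _
        rw [map_smul]
        have : fL (fun j => mL w j * X (Fin.castSucc p)) = 0 := by
          funext s
          have := congrFun (congrFun (h w).2 s) p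
          rw [hfs] at this
          simpa using this
        rw [this, smul_zero]
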